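/- Let H be a complex Hilbert space with inner product ⟨·,·⟩ conjugate-linear in the first argument, D ⊆ H a subspace, and L : D → H a linear map. Let B : H → H be a bounded, self-adjoint, nonnegative, compact operator satisfying the trace bound: for every finite orthonormal family (e_i)_{i ∈ F} in H, ∑_{i ∈ F} Re ⟨e_i, B e_i⟩ ≤ τ. Let h > 0 and λ ∈ ℝ, and assume the quadratic-form lower bound ‖L u‖² + h · Re ⟨u, B u⟩ ≥ (1 + 2λh) ‖u‖² for every u ∈ D. Then for every ε > 0 there exists a finite-dimensional subspace F ⊆ H with dim F ≤ τ / ε such that ‖L u‖² ≥ (1 + 2λh − εh) ‖u‖² for every u ∈ D lying in the orthogonal complement of F. -/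

import Mathlib

private lemma finset_orthonormal_iff_ite {H : Type*} [NormedAddCommGroup H]
    [InnerProductSpace ℂ H] [DecidableEq H] {s : Finset H} :
    Orthonormal ℂ (fun x : s => (x : H)) ↔
      ∀ v ∈ s, ∀ w ∈ s, (inner ℂ v w : ℂ) = if v = w then 1 else 0 := by
  rw [show (fun x : s => (x : H)) = (Subtype.val : ((s : Set H)) → H) from rfl,
    orthonormal_subtype_iff_ite]
  simp

theorem stmt_12 {H : Type*} [NormedAddCommGroup H] [InnerProductSpace ℂ H] [CompleteSpace H]
    (D : Submodule ℂ H) (L : D →ₗ[ℂ] H)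
    (B : H →L[ℂ] H) (hcpt : IsCompactOperator B)
    (hsa : ∀ u v : H, (inner ℂ u (B v) : ℂ) = inner ℂ (B u) v)
    (hpos : ∀ u : H, 0 ≤ (inner ℂ u (B u) : ℂ).re)
    (τ : ℝ)
    (htr : ∀ s : Finset H, Orthonormal ℂ (fun x : s => (x : H)) →
      ∑ e ∈ s, (inner ℂ (e : H) (B e) : ℂ).re ≤ τ)
    (h lam : ℝ) (hh : 0 < h)
    (hlow : ∀ u : D,
      (1 + 2 * lam * h) * ‖(u : H)‖ ^ 2 ≤ ‖L u‖ ^ 2 + h * (inner ℂ (u : H) (B (u : H)) : ℂ).re) :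
    ∀ ε > 0, ∃ F : Submodule ℂ H, FiniteDimensional ℂ F ∧
      (Module.finrank ℂ F : ℝ) ≤ τ / ε ∧
      ∀ u : D, (u : H) ∈ Fᗮ → (1 + 2 * lam * h - ε * h) * ‖(u : H)‖ ^ 2 ≤ ‖L u‖ ^ 2 := by
  classical
  intro ε hε
  have hτ : 0 ≤ τ := by
    have := htr ∅ (by rw [finset_orthonormal_iff_ite]; intro v hv; simp at hv)
    simpa using this
  set P : ℕ → Prop := fun n => ∃ s : Finset H, s.card = n ∧
    Orthonormal ℂ (fun x : s => (x : H)) ∧ ∀ e ∈ s, ε < (inner ℂ (e : H) (B e) : ℂ).re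
  have hP0 : P 0 := ⟨∅, by simp, by
    rw [finset_orthonormal_iff_ite]; intro v hv; simp at hv, by simp⟩
  set M := Nat.floor (τ / ε) with hM
  have hbound : ∀ n, P n → n ≤ M := by
    rintro n ⟨s, hcard, hon, hgt⟩
    have hsum : (s.card : ℝ) * ε ≤ ∑ e ∈ s, (inner ℂ (e : H) (B e) : ℂ).re := by
      have := Finset.card_nsmul_le_sum s (fun e => (inner ℂ (e : H) (B e) : ℂ).re) ε
        (fun e he => (hgt e he).le)
      simpa [nsmul_eq_mul] using this
    have hle : (n : ℝ) * ε ≤ τ := hcard ▸ le_trans hsum (htr s hon)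
    have : (n : ℝ) ≤ τ / ε := (le_div_iff₀ hε).2 hle
    exact Nat.le_floor this
  set n₀ := Nat.findGreatest P M with hn₀
  have hPn₀ : P n₀ := Nat.findGreatest_spec (Nat.zero_le M) hP0
  have hmax : ¬ P (n₀ + 1) := by
    by_cases hle : n₀ + 1 ≤ M
    · exact Nat.findGreatest_is_greatest (Nat.lt_succ_self n₀) hle
    · intro hP; exact hle (hbound _ hP)
  obtain ⟨s, hcard, hon, hgt⟩ := hPn₀
  have hli : LinearIndependent ℂ ((↑) : s → H) := hon.linearIndependent
  refine ⟨Submodule.span ℂ (s : Set H), FiniteDimensional.span_finset ℂ s, ?_, ?_⟩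
  · rw [finrank_span_finset_eq_card hli, hcard]
    calc (n₀ : ℝ) ≤ M := by exact_mod_cast hbound n₀ ⟨s, hcard, hon, hgt⟩
      _ ≤ τ / ε := Nat.floor_le (by positivity)
  · intro u hu
    have hkey : (inner ℂ (u : H) (B (u : H)) : ℂ).re ≤ ε * ‖(u : H)‖ ^ 2 := by
      by_cases hu0 : (u : H) = 0
      · simp [hu0]
      · by_contra hcon
        push_neg at hcon
        have hnorm : (0:ℝ) < ‖(u : H)‖ := norm_pos_iff.2 hu0
        set w : H := (‖(u : H)‖⁻¹ : ℂ) • (u : H) with hw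
        have hnw : ‖w‖ = 1 := by
          rw [hw, norm_smul]
          simp [norm_inv, norm_ne_zero_iff.2 hu0]
        have hc : (inner ℂ w (B w) : ℂ)
            = ((‖(u : H)‖⁻¹ ^ 2 : ℝ) : ℂ) * inner ℂ (u : H) (B (u : H)) := by
          rw [hw, map_smul, inner_smul_left, inner_smul_right]
          rw [show ((‖(u : H)‖⁻¹ : ℂ)) = ((‖(u : H)‖⁻¹ : ℝ) : ℂ) by push_cast; ring,
            Complex.conj_ofReal]
          push_cast
          ring
        have hwB : ε < (inner ℂ w (B w) : ℂ).re := by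
          have hre : (inner ℂ w (B w) : ℂ).re
              = ‖(u : H)‖⁻¹ ^ 2 * (inner ℂ (u : H) (B (u : H)) : ℂ).re := by
            rw [hc, Complex.re_ofReal_mul]
          rw [hre, inv_pow, ← div_eq_inv_mul]
          exact (lt_div_iff₀ (by positivity)).2 hcon
        have hwperp : ∀ e ∈ s, (inner ℂ (e : H) w : ℂ) = 0 := by
          intro e he
          have heF : (e : H) ∈ Submodule.span ℂ (s : Set H) := Submodule.subset_span he
          have := (Submodule.mem_orthogonal _ _).1 hu e heF
          rw [hw, inner_smul_right, this, mul_zero]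
        have hwns : w ∉ s := by
          intro hws
          have : (inner ℂ w w : ℂ) = 0 := hwperp w hws
          rw [inner_self_eq_norm_sq_to_K, hnw] at this
          norm_num at this
        apply hmax
        refine ⟨insert w s, by rw [Finset.card_insert_of_notMem hwns, hcard], ?_, ?_⟩
        · rw [finset_orthonormal_iff_ite]
          have hson := finset_orthonormal_iff_ite.1 hon
          intro v hv x hx
          rcases Finset.mem_insert.1 hv with rfl | hv <;>
            rcases Finset.mem_insert.1 hx with rfl | hx
          · simp [inner_self_eq_norm_sq_to_K, hnw]
          · rw [if_neg (by rintro rfl; exact hwns hx)]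
            have := hwperp x hx
            rw [← inner_conj_symm, this, map_zero]
          · rw [if_neg (by rintro rfl; exact hwns hv)]
            exact hwperp v hv
          · exact hson v hv x hx
        · intro e he
          rcases Finset.mem_insert.1 he with rfl | he
          · exact hwB
          · exact hgt e he
    nlinarith [hlow u, hkey, sq_nonneg ‖(u:H)‖]
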